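/- arXiv:0803.2366 — 3 statements merged into one kernel-verified Lean document; each statement's English description precedes it below -/
import Mathlib

section
/- Fix an integer k ≥ 1. Assume that lim_{l→0⁺} (k!)² · Z_l(k+1) · exp(π²/(3l)) · l^{2k+1} = 2π. Let ℓ be a function assigning to every complex number t with 0 < |t| < 1 a positive real number ℓ(t), and suppose there are constants C > 0 and 0 < δ < 1 such that |ℓ(t) − 2π²/log(1/|t|)| ≤ C·(log(1/|t|))^{−4} whenever 0 < |t| < δ. Then Z_{ℓ(t)}(k+1) is asymptotically equivalent to (1/(π·(2π²)^{2k}·(k!)²)) · |t|^{1/6} · (log(1/|t|))^{2k+1} as t → 0 (t ≠ 0); that is, the quotient of the left-hand side by the right-hand side tends to 1. -/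
open Complex Filter Topology

/-- `Z_l(s) = ∏_{m=0}^{∞}(1 − e^{−(s+m)l})²`. -/
noncomputable def Zl (l : ℝ) (s : ℂ) : ℂ :=
  ∏' m : ℕ, (1 - Complex.exp (-(s + m) * l)) ^ 2

/-- Fix an integer `k ≥ 1` and assume
`lim_{l→0⁺} (k!)² · Z_l(k+1) · exp(π²/(3l)) · l^{2k+1} = 2π`.
Let `ℓ` assign to every complex `t` with `0 < |t| < 1` a positive real number, and suppose
`|ℓ(t) − 2π²/log(1/|t|)| ≤ C·(log(1/|t|))^{−4}` for `0 < |t| < δ`.  Then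
`Z_{ℓ(t)}(k+1) ∼ (1/(π·(2π²)^{2k}·(k!)²)) · |t|^{1/6} · (log(1/|t|))^{2k+1}` as `t → 0`,
`t ≠ 0`: the quotient of the two sides tends to `1`. -/
theorem Zl_degeneration (k : ℕ) (hk : 1 ≤ k)
    (hlim : Tendsto
      (fun l : ℝ => ((Nat.factorial k : ℂ)) ^ 2 * Zl l (k + 1) *
        Complex.exp ((Real.pi ^ 2 / (3 * l) : ℝ)) * (l : ℂ) ^ (2 * k + 1))
      (nhdsWithin 0 (Set.Ioi 0)) (nhds ((2 * Real.pi : ℝ) : ℂ)))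
    (ℓ : ℂ → ℝ)
    (hpos : ∀ t : ℂ, 0 < ‖t‖ → ‖t‖ < 1 → 0 < ℓ t)
    (C : ℝ) (hC : 0 < C) (δ : ℝ) (hδ0 : 0 < δ) (hδ1 : δ < 1)
    (hest : ∀ t : ℂ, 0 < ‖t‖ → ‖t‖ < δ →
      |ℓ t - 2 * Real.pi ^ 2 / Real.log (1 / ‖t‖)| ≤
        C * (Real.log (1 / ‖t‖)) ^ (-4 : ℤ)) :
    Tendsto
      (fun t : ℂ => Zl (ℓ t) (k + 1) /
        (((1 / (Real.pi * (2 * Real.pi ^ 2) ^ (2 * k) * (Nat.factorial k : ℝ) ^ 2)) *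
          ‖t‖ ^ ((1 : ℝ) / 6) *
          (Real.log (1 / ‖t‖)) ^ (2 * k + 1) : ℝ) : ℂ))
      (nhdsWithin 0 {t : ℂ | t ≠ 0}) (nhds 1) := by
  set 𝓕 : Filter ℂ := nhdsWithin 0 {t : ℂ | t ≠ 0} with h𝓕
  set L : ℂ → ℝ := fun t => Real.log (1 / ‖t‖) with hLdef
  set π := Real.pi
  -- basic filter facts
  have hne : ∀ᶠ t in 𝓕, t ≠ 0 := eventually_mem_nhdsWithin
  have habs0 : Tendsto (fun t : ℂ => ‖t‖) 𝓕 (𝓝 0) := by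
    have h1 : Tendsto (fun t : ℂ => ‖t‖) (𝓝 0) (𝓝 0) := by
      simpa using (continuous_norm.tendsto (0:ℂ))
    exact h1.mono_left nhdsWithin_le_nhds
  have habspos : ∀ᶠ t in 𝓕, 0 < ‖t‖ :=
    hne.mono fun t ht => norm_pos_iff.mpr ht
  have habs : Tendsto (fun t : ℂ => ‖t‖) 𝓕 (𝓝[>] 0) := by
    rw [tendsto_nhdsWithin_iff]
    exact ⟨habs0, habspos⟩
  have hL : Tendsto L 𝓕 atTop := by
    have h1 : Tendsto (fun x : ℝ => Real.log (1 / x)) (𝓝[>] (0:ℝ)) atTop := by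
      simp only [one_div, Real.log_inv]
      exact tendsto_neg_atBot_atTop.comp Real.tendsto_log_nhdsGT_zero
    exact h1.comp habs
  have hLpos : ∀ᶠ t in 𝓕, 1 ≤ L t := hL.eventually_ge_atTop 1
  have hsmall : ∀ᶠ t in 𝓕, ‖t‖ < δ := habs0.eventually_lt_const hδ0
  have hsmall1 : ∀ᶠ t in 𝓕, ‖t‖ < 1 := habs0.eventually_lt_const one_pos
  have hℓpos : ∀ᶠ t in 𝓕, 0 < ℓ t := by
    filter_upwards [habspos, hsmall1] with t h1 h2 using hpos t h1 h2
  -- u = ℓ * L → 2π²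
  have hCL : Tendsto (fun t => C / L t) 𝓕 (𝓝 0) :=
    Tendsto.div_atTop tendsto_const_nhds hL
  -- a key pointwise bound
  have key : ∀ t : ℂ, 0 < ‖t‖ → ‖t‖ < δ → 1 ≤ L t →
      |ℓ t * L t - 2 * π ^ 2| * L t ≤ C / L t ∧ |ℓ t * L t - 2 * π ^ 2| ≤ C / L t := by
    intro t h1 h2 h3
    have hL0 : 0 < L t := lt_of_lt_of_le one_pos h3
    have he := hest t h1 h2
    have h4 : ℓ t * L t - 2 * π ^ 2 = (ℓ t - 2 * π ^ 2 / L t) * L t := by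
      field_simp
    have hz : (L t) ^ (-4 : ℤ) = ((L t) ^ (4:ℕ))⁻¹ := by
      rw [zpow_neg, show ((4:ℤ)) = ((4:ℕ):ℤ) from rfl, zpow_natCast]
    rw [hz] at he
    have hB : 0 ≤ |ℓ t - 2 * π ^ 2 / L t| := abs_nonneg _
    have hB4 : |ℓ t - 2 * π ^ 2 / L t| * (L t) ^ (4:ℕ) ≤ C := by
      have h5 := mul_le_mul_of_nonneg_right he (by positivity : (0:ℝ) ≤ (L t) ^ (4:ℕ))
      calc |ℓ t - 2 * π ^ 2 / L t| * (L t) ^ (4:ℕ)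
          ≤ C * ((L t) ^ (4:ℕ))⁻¹ * (L t) ^ (4:ℕ) := h5
        _ = C := by field_simp
    constructor
    · rw [h4, abs_mul, abs_of_pos hL0, le_div_iff₀ hL0]
      nlinarith [hB4, mul_nonneg (mul_nonneg (mul_nonneg (mul_nonneg hB hL0.le) hL0.le)
        hL0.le) (sub_nonneg.mpr h3)]
    · rw [h4, abs_mul, abs_of_pos hL0, le_div_iff₀ hL0]
      have hLL : (0:ℝ) ≤ L t * L t - 1 := by nlinarith
      nlinarith [hB4, mul_nonneg (mul_nonneg (mul_nonneg hB hL0.le) hL0.le) hLL]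
  have hub : ∀ᶠ t in 𝓕, |ℓ t * L t - 2 * π ^ 2| ≤ C / L t := by
    filter_upwards [habspos, hsmall, hLpos] with t h1 h2 h3 using (key t h1 h2 h3).2
  have hu : Tendsto (fun t => ℓ t * L t) 𝓕 (𝓝 (2 * π ^ 2)) := by
    have h0 : Tendsto (fun t => ℓ t * L t - 2 * π ^ 2) 𝓕 (𝓝 0) := by
      apply squeeze_zero_norm' _ hCL
      simpa [Real.norm_eq_abs] using hub
    have := h0.add_const (2 * π ^ 2)
    simpa using this
  -- v = (u - 2π²) * L → 0
  have hv : Tendsto (fun t => (ℓ t * L t - 2 * π ^ 2) * L t) 𝓕 (𝓝 0) := by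
    apply squeeze_zero_norm' _ hCL
    filter_upwards [habspos, hsmall, hLpos] with t h1 h2 h3
    have hL0 : 0 < L t := lt_of_lt_of_le one_pos h3
    rw [Real.norm_eq_abs, abs_mul, abs_of_pos hL0]
    exact (key t h1 h2 h3).1
  -- ℓ → 0 within Ioi 0
  have hℓ0 : Tendsto ℓ 𝓕 (𝓝 0) := by
    have h1 : Tendsto (fun t => ℓ t * L t / L t) 𝓕 (𝓝 0) :=
      Tendsto.div_atTop hu hL
    apply h1.congr'
    filter_upwards [hLpos] with t h2
    have : L t ≠ 0 := (lt_of_lt_of_le one_pos h2).ne'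
    field_simp
  have hℓ : Tendsto ℓ 𝓕 (𝓝[>] 0) := by
    rw [tendsto_nhdsWithin_iff]
    exact ⟨hℓ0, hℓpos⟩
  have hF : Tendsto (fun t => ((Nat.factorial k : ℂ)) ^ 2 * Zl (ℓ t) (k + 1) *
      Complex.exp ((π ^ 2 / (3 * ℓ t) : ℝ)) * ((ℓ t : ℝ) : ℂ) ^ (2 * k + 1)) 𝓕
      (𝓝 ((2 * π : ℝ) : ℂ)) := hlim.comp hℓ
  -- e = L/6 - π²/(3ℓ) → 0
  have hπ2 : (0:ℝ) < 2 * π ^ 2 := by positivity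
  have he : Tendsto (fun t => L t / 6 - π ^ 2 / (3 * ℓ t)) 𝓕 (𝓝 0) := by
    have h1 : Tendsto (fun t => (ℓ t * L t - 2 * π ^ 2) * L t / (6 * (ℓ t * L t))) 𝓕
        (𝓝 (0 / (6 * (2 * π ^ 2)))) := by
      exact Tendsto.div hv (hu.const_mul 6) (by positivity)
    rw [zero_div] at h1
    apply h1.congr'
    filter_upwards [hℓpos, hLpos] with t h2 h3
    have hL0 : (0:ℝ) < L t := lt_of_lt_of_le one_pos h3
    field_simp
    ring
  -- w = 2π²/u → 1
  have hw : Tendsto (fun t => 2 * π ^ 2 / (ℓ t * L t)) 𝓕 (𝓝 1) := by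
    have h1 : Tendsto (fun t => 2 * π ^ 2 / (ℓ t * L t)) 𝓕 (𝓝 (2 * π ^ 2 / (2 * π ^ 2))) :=
      Tendsto.div tendsto_const_nhds hu hπ2.ne'
    rwa [div_self hπ2.ne'] at h1
  -- the comparison function g
  set g : ℂ → ℂ := fun t =>
    (((Nat.factorial k : ℂ)) ^ 2 * Zl (ℓ t) (k + 1) *
      Complex.exp ((π ^ 2 / (3 * ℓ t) : ℝ)) * ((ℓ t : ℝ) : ℂ) ^ (2 * k + 1)) *
    ((2 * π : ℝ) : ℂ)⁻¹ *
    Complex.exp ((L t / 6 - π ^ 2 / (3 * ℓ t) : ℝ) : ℂ) *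
    (((2 * π ^ 2 / (ℓ t * L t) : ℝ)) : ℂ) ^ (2 * k + 1) with hgdef
  have hg : Tendsto g 𝓕 (𝓝 1) := by
    have hπ0 : ((2 * π : ℝ) : ℂ) ≠ 0 := by
      simp only [ne_eq, Complex.ofReal_eq_zero]
      positivity
    have t1 : Tendsto (fun t => (((Nat.factorial k : ℂ)) ^ 2 * Zl (ℓ t) (k + 1) *
        Complex.exp ((π ^ 2 / (3 * ℓ t) : ℝ)) * ((ℓ t : ℝ) : ℂ) ^ (2 * k + 1)) *
        ((2 * π : ℝ) : ℂ)⁻¹) 𝓕 (𝓝 1) := by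
      have := hF.mul_const ((2 * π : ℝ) : ℂ)⁻¹
      rwa [mul_inv_cancel₀ hπ0] at this
    have t2 : Tendsto (fun t => Complex.exp ((L t / 6 - π ^ 2 / (3 * ℓ t) : ℝ) : ℂ)) 𝓕 (𝓝 1) := by
      have c1 : Tendsto (fun t => ((L t / 6 - π ^ 2 / (3 * ℓ t) : ℝ) : ℂ)) 𝓕 (𝓝 0) := by
        have := (Complex.continuous_ofReal.tendsto 0).comp he
        simpa [Function.comp_def] using this
      have := (Complex.continuous_exp.tendsto 0).comp c1
      simpa [Function.comp_def] using this
    have t3 : Tendsto (fun t => ((((2 * π ^ 2 / (ℓ t * L t) : ℝ))) : ℂ) ^ (2 * k + 1)) 𝓕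
        (𝓝 1) := by
      have c1 : Tendsto (fun t => (((2 * π ^ 2 / (ℓ t * L t) : ℝ)) : ℂ)) 𝓕 (𝓝 1) := by
        have := (Complex.continuous_ofReal.tendsto 1).comp hw
        simpa [Function.comp_def] using this
      have := c1.pow (2 * k + 1)
      simpa using this
    have h := (t1.mul t2).mul t3
    simp only [mul_one, one_mul] at h
    exact h
  -- eventual equality of the goal function and g
  apply hg.congr'
  filter_upwards [hℓpos, hLpos, habspos] with t h1 h2 h3
  have hL0 : (0:ℝ) < L t := lt_of_lt_of_le one_pos h2
  simp only [hgdef]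
  -- rewrite |t|^(1/6) as exp(-L/6)
  have habs6 : (‖t‖ : ℝ) ^ ((1:ℝ)/6) = Real.exp (-(L t) * (1/6)) := by
    rw [Real.rpow_def_of_pos h3]
    congr 1
    have : Real.log (‖t‖) = - L t := by
      rw [hLdef]; simp [Real.log_inv]
    rw [this]
  rw [show Real.log (1 / ‖t‖) = L t from rfl, habs6]
  have hca : ((ℓ t : ℝ):ℂ) ≠ 0 := by exact_mod_cast h1.ne'
  have hcL : ((L t : ℝ):ℂ) ≠ 0 := by exact_mod_cast hL0.ne'
  have hcπ : ((π : ℝ):ℂ) ≠ 0 := by exact_mod_cast Real.pi_ne_zero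
  have hck : ((Nat.factorial k : ℕ):ℂ) ≠ 0 := by
    exact_mod_cast (Nat.factorial_ne_zero k)
  push_cast [Complex.ofReal_exp]
  rw [Complex.exp_sub, show ((-(L t:ℝ):ℂ) * (1/6)) = -(((L t:ℝ):ℂ)/6) by push_cast; ring,
    Complex.exp_neg]
  have hE6 : Complex.exp (((L t:ℝ):ℂ)/6) ≠ 0 := Complex.exp_ne_zero _
  have hE3 : Complex.exp (((π:ℝ):ℂ) ^ 2 / (3 * ((ℓ t:ℝ):ℂ))) ≠ 0 := Complex.exp_ne_zero _
  field_simp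
  ring_nf
  field_simp
  rw [one_div, one_div, inv_pow, inv_pow]
  field_simp
end

section
/- Let k ≥ 1 be an integer and 0 < c < 1 a real constant. Then lim_{t→0, t≠0} I₁(t) · (log(1/|t|))^{−(2k+1)} = (2k)! / (2^{k−1} · π^{2k} · (k!)²). Equivalently, I₁(t) = (1/(2^{k−1}π^{2k})) · (log(1/|t|))^{2k+1} · ((2k)!/(k!)²) · R(t) where R(t) → 1 as t → 0. -/
open Complex MeasureTheory Filter Topology

/-- The annulus `A_t = {u ∈ ℂ : |t|/c < |u| < c}`. -/
def annulusA (c : ℝ) (t : ℂ) : Set ℂ :=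
  {u : ℂ | ‖t‖ / c < ‖u‖ ∧ ‖u‖ < c}

/-- The density
`F_{t,k}(u) = (2^k/π)·|u|^{−2k−2}·((|u|·log|t|/π)·sin(π·log|u|/log|t|))^{2k}`. -/
noncomputable def densityF (k : ℕ) (t u : ℂ) : ℝ :=
  (2 ^ k / Real.pi) * (‖u‖) ^ (-(2 * (k : ℤ)) - 2) *
    ((‖u‖ * Real.log (‖t‖) / Real.pi) *
      Real.sin (Real.pi * Real.log (‖u‖) / Real.log (‖t‖))) ^ (2 * k)

/-- `I₁(t) = ∫_{A_t} F_{t,k}(u) dA(u)`, the integral with respect to Lebesgue measure. -/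
noncomputable def Ione (k : ℕ) (c : ℝ) (t : ℂ) : ℝ :=
  ∫ u in annulusA c t, densityF k t u

lemma wallis_prod (k : ℕ) :
    ∏ i ∈ Finset.range k, (2 * (i : ℝ) + 1) / (2 * i + 2)
      = (Nat.factorial (2 * k) : ℝ) / (4 ^ k * (Nat.factorial k : ℝ) ^ 2) := by
  induction k with
  | zero => simp
  | succ n ih =>
    rw [Finset.prod_range_succ, ih]
    have h1 : 2 * (n + 1) = (2 * n + 1) + 1 := by ring
    rw [h1, Nat.factorial_succ, Nat.factorial_succ, Nat.factorial_succ n]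
    have h2 : (Nat.factorial (2 * n) : ℝ) ≠ 0 := Nat.cast_ne_zero.2 (Nat.factorial_ne_zero _)
    have h3 : (Nat.factorial n : ℝ) ≠ 0 := Nat.cast_ne_zero.2 (Nat.factorial_ne_zero _)
    have h4 : (4 : ℝ) ^ n ≠ 0 := by positivity
    have h5 : (2 * (n : ℝ) + 2) ≠ 0 := by positivity
    push_cast
    field_simp
    ring

lemma Ione_eq (k : ℕ) (c : ℝ) (hc0 : 0 < c) (hc1 : c < 1) (t : ℂ)
    (ht0 : t ≠ 0) (ht : ‖t‖ < c ^ 2) :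
    Ione k c t = (2 ^ (k + 1) * (-Real.log (‖t‖)) ^ (2 * k + 1) / Real.pi ^ (2 * k + 1)) *
      ∫ x in (Real.pi * Real.log c / Real.log (‖t‖))..(Real.pi -
        Real.pi * Real.log c / Real.log (‖t‖)), Real.sin x ^ (2 * k) := by
  have hπ : (0 : ℝ) < Real.pi := Real.pi_pos
  have hπ0 : Real.pi ≠ 0 := hπ.ne'
  set s : ℝ := ‖t‖ with hs_def
  have hs : 0 < s := norm_pos_iff.mpr ht0
  set L : ℝ := Real.log s with hL_def
  have hs1 : s < 1 := lt_trans ht (by nlinarith)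
  have hL : L < 0 := Real.log_neg hs hs1
  have hL0 : L ≠ 0 := hL.ne
  have hr0 : 0 < s / c := div_pos hs hc0
  have hr0c : s / c < c := by
    rw [div_lt_iff₀ hc0]; nlinarith
  set g : ℝ → ℝ := fun r => (2 ^ k / Real.pi) * r ^ (-(2 * (k : ℤ)) - 2) *
      ((r * L / Real.pi) * Real.sin (Real.pi * Real.log r / L)) ^ (2 * k) with hg_def
  -- Step A : reduce to a radial integral
  have hmeas : MeasurableSet (annulusA c t) := by
    have : annulusA c t = (fun u : ℂ => ‖u‖) ⁻¹' Set.Ioo (s / c) c := rfl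
    rw [this]
    exact measurableSet_Ioo.preimage continuous_norm.measurable
  have hA : Ione k c t = ∫ u : ℂ, (Set.Ioo (s / c) c).indicator g (‖u‖) := by
    rw [Ione, ← integral_indicator hmeas]
    refine integral_congr_ae (Filter.Eventually.of_forall fun u => ?_)
    show (annulusA c t).indicator (densityF k t) u = (Set.Ioo (s / c) c).indicator g (‖u‖)
    by_cases h : ‖u‖ ∈ Set.Ioo (s / c) c
    · rw [Set.indicator_of_mem h, Set.indicator_of_mem (show u ∈ annulusA c t from h)]
      rfl
    · rw [Set.indicator_of_notMem h, Set.indicator_of_notMem (show u ∉ annulusA c t from h)]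
  -- Step B : polar / radial formula
  have hB : (∫ u : ℂ, (Set.Ioo (s / c) c).indicator g (‖u‖))
      = 2 * (Real.pi * ∫ y in Set.Ioi (0 : ℝ), y * (Set.Ioo (s / c) c).indicator g y) := by
    have h := MeasureTheory.integral_fun_norm_addHaar (volume : Measure ℂ)
      (fun r => (Set.Ioo (s / c) c).indicator g r)
    simp only [Complex.finrank_real_complex] at h
    rw [h]
    have hball : ((volume : Measure ℂ) (Metric.ball 0 1)).toReal = Real.pi := by
      simp [Complex.volume_ball]
    rw [show (volume : Measure ℂ).real (Metric.ball 0 1) = ((volume : Measure ℂ) (Metric.ball 0 1)).toReal from rfl, hball]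
    simp [smul_eq_mul, mul_assoc]
  -- Step C : restrict to the interval
  have hC : (∫ y in Set.Ioi (0 : ℝ), y * (Set.Ioo (s / c) c).indicator g y)
      = ∫ y in Set.Ioo (s / c) c, y * g y := by
    have h1 : ∀ y : ℝ, y * (Set.Ioo (s / c) c).indicator g y
        = (Set.Ioo (s / c) c).indicator (fun y => y * g y) y := by
      intro y
      by_cases h : y ∈ Set.Ioo (s / c) c
      · rw [Set.indicator_of_mem h, Set.indicator_of_mem h]
      · rw [Set.indicator_of_notMem h, Set.indicator_of_notMem h, mul_zero]
    have hss : Set.Ioo (s / c) c ⊆ Set.Ioi 0 := fun y hy => lt_trans hr0 hy.1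
    simp_rw [h1]
    rw [integral_indicator measurableSet_Ioo, Measure.restrict_restrict measurableSet_Ioo,
      Set.inter_eq_self_of_subset_left hss]
  -- Step D : simplify the integrand on the interval
  set C : ℝ := (2 ^ k / Real.pi) * (L / Real.pi) ^ (2 * k) with hC_def
  set gC : ℝ → ℝ := fun r => C * (r⁻¹ * Real.sin (Real.pi * Real.log r / L) ^ (2 * k)) with hgC_def
  have hD : (∫ y in Set.Ioo (s / c) c, y * g y) = ∫ y in Set.Ioo (s / c) c, gC y := by
    refine setIntegral_congr_fun measurableSet_Ioo fun y hy => ?_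
    have hy0 : 0 < y := lt_trans hr0 hy.1
    have hyne : y ≠ 0 := hy0.ne'
    have hzp : y ^ (-(2 * (k : ℤ)) - 2) = (y ^ (2 * k + 2 : ℕ))⁻¹ := by
      rw [← zpow_natCast y (2 * k + 2), ← zpow_neg]
      congr 1; push_cast; ring
    simp only [hg_def, hgC_def, hC_def, hzp, mul_pow, div_pow]
    have hpow : y ^ (2 * k + 2 : ℕ) = y ^ (2 * k) * y ^ 2 := by rw [pow_add]
    rw [hpow]
    field_simp
  -- Step E : interval integral
  have hE : (∫ y in Set.Ioo (s / c) c, gC y) = ∫ y in (s / c)..c, gC y := by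
    rw [intervalIntegral.integral_of_le hr0c.le, integral_Ioc_eq_integral_Ioo]
  -- Step F : substitution
  set a : ℝ := Real.pi * Real.log c / L with ha_def
  set b : ℝ := Real.pi - a with hb_def
  set φ : ℝ → ℝ := fun x => Real.exp (L * x / Real.pi) with hφ_def
  have hφa : φ a = c := by
    have h : L * a / Real.pi = Real.log c := by
      rw [ha_def]; field_simp
    show Real.exp (L * a / Real.pi) = c
    rw [h, Real.exp_log hc0]
  have hφb : φ b = s / c := by
    have h : L * b / Real.pi = L - Real.log c := by
      rw [hb_def, ha_def]; field_simp
    show Real.exp (L * b / Real.pi) = s / c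
    rw [h, Real.exp_sub, Real.exp_log hs, Real.exp_log hc0]
  have hderiv : ∀ x ∈ Set.uIcc b a, HasDerivAt φ ((L / Real.pi) * Real.exp (L * x / Real.pi)) x := by
    intro x _
    have hlin : HasDerivAt (fun x : ℝ => L * x / Real.pi) (L / Real.pi) x := by
      simpa using ((hasDerivAt_id x).const_mul L).div_const Real.pi
    have h2 := (Real.hasDerivAt_exp (L * x / Real.pi)).comp x hlin
    have h3 : (L / Real.pi) * Real.exp (L * x / Real.pi)
        = Real.exp (L * x / Real.pi) * (L / Real.pi) := mul_comm _ _
    rw [h3]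
    exact h2
  have hcont' : ContinuousOn (fun x => (L / Real.pi) * Real.exp (L * x / Real.pi)) (Set.uIcc b a) :=
    (continuous_const.mul (Real.continuous_exp.comp ((continuous_const.mul continuous_id).div_const
      Real.pi))).continuousOn
  have hgcont : ContinuousOn gC (φ '' Set.uIcc b a) := by
    have hsub : φ '' Set.uIcc b a ⊆ Set.Ioi 0 := by
      rintro _ ⟨x, _, rfl⟩; exact Real.exp_pos _
    refine ContinuousOn.mono ?_ hsub
    refine continuousOn_const.mul (ContinuousOn.mul ?_ ?_)
    · exact continuousOn_id.inv₀ fun x hx => ne_of_gt hx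
    · refine ContinuousOn.pow ?_ _
      refine Real.continuous_sin.comp_continuousOn ?_
      exact (continuousOn_const.mul (Real.continuousOn_log.mono fun x hx =>
        ne_of_gt (α := ℝ) hx)).div_const L
  have hsub := intervalIntegral.integral_comp_smul_deriv' hderiv hcont' hgcont
  rw [hφa, hφb] at hsub
  have hF : (∫ y in (s / c)..c, gC y) = -(C * (L / Real.pi)) * ∫ x in a..b, Real.sin x ^ (2 * k) := by
    rw [← hsub]
    have hptw : ∀ x : ℝ, ((L / Real.pi) * Real.exp (L * x / Real.pi)) • (gC ∘ φ) x
        = C * (L / Real.pi) * Real.sin x ^ (2 * k) := by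
      intro x
      have hei : Real.exp (L * x / Real.pi) ≠ 0 := (Real.exp_pos _).ne'
      simp only [hgC_def, hφ_def, Function.comp, smul_eq_mul, Real.log_exp]
      have harg : Real.pi * (L * x / Real.pi) / L = x := by field_simp
      rw [harg]
      field_simp
    rw [intervalIntegral.integral_congr (fun x _ => hptw x), intervalIntegral.integral_const_mul,
      intervalIntegral.integral_symm b a]
    ring
  -- assemble
  rw [hA, hB, hC, hD, hE, hF]
  have hodd : Odd (2 * k + 1) := ⟨k, by ring⟩
  rw [hodd.neg_pow]
  simp only [hC_def]
  rw [div_pow]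
  field_simp
  ring

/-- For an integer `k ≥ 1` and `0 < c < 1`,
`lim_{t→0, t≠0} I₁(t) · (log(1/|t|))^{−(2k+1)} = (2k)! / (2^{k−1}·π^{2k}·(k!)²)`. -/
theorem Ione_limit (k : ℕ) (hk : 1 ≤ k) (c : ℝ) (hc0 : 0 < c) (hc1 : c < 1) :
    Tendsto
      (fun t : ℂ => Ione k c t * (Real.log (1 / ‖t‖)) ^ (-(2 * (k : ℤ)) - 1))
      (nhdsWithin 0 {t : ℂ | t ≠ 0})
      (nhds ((Nat.factorial (2 * k) : ℝ) /
        (2 ^ (k - 1) * Real.pi ^ (2 * k) * (Nat.factorial k : ℝ) ^ 2))) := by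
  have hπ : (0 : ℝ) < Real.pi := Real.pi_pos
  have hπ0 : Real.pi ≠ 0 := hπ.ne'
  set a : ℂ → ℝ := fun t => Real.pi * Real.log c / Real.log (‖t‖) with ha_def
  set G : ℝ → ℝ := fun y => ∫ x in (0:ℝ)..y, Real.sin x ^ (2 * k) with hG_def
  have hint : ∀ p q : ℝ, IntervalIntegrable (fun x => Real.sin x ^ (2 * k)) volume p q :=
    fun p q => ((Real.continuous_sin.pow _).intervalIntegrable p q)
  have hGcont : Continuous G := intervalIntegral.continuous_primitive hint 0
  have habs : Tendsto (fun t : ℂ => ‖t‖) (𝓝[≠] (0:ℂ)) (𝓝[>] (0:ℝ)) := by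
    rw [tendsto_nhdsWithin_iff]
    constructor
    · have h : Tendsto (fun t : ℂ => ‖t‖) (𝓝 0) (𝓝 (‖(0:ℂ)‖)) :=
        continuous_norm.tendsto 0
      simpa using h.mono_left nhdsWithin_le_nhds
    · filter_upwards [self_mem_nhdsWithin] with t ht
      exact Set.mem_Ioi.mpr (norm_pos_iff.mpr ht)
  have hLtend : Tendsto (fun t : ℂ => Real.log (‖t‖)) (𝓝[≠] (0:ℂ)) atBot :=
    Real.tendsto_log_nhdsGT_zero.comp habs
  have hatend : Tendsto a (𝓝[≠] (0:ℂ)) (𝓝 0) := by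
    have hneg : Tendsto (fun t : ℂ => -Real.log (‖t‖)) (𝓝[≠] (0:ℂ)) atTop :=
      tendsto_neg_atBot_atTop.comp hLtend
    have hinv : Tendsto (fun t : ℂ => (-Real.log (‖t‖))⁻¹) (𝓝[≠] (0:ℂ)) (𝓝 0) :=
      tendsto_inv_atTop_zero.comp hneg
    have h2 : Tendsto (fun t : ℂ => (Real.log (‖t‖))⁻¹) (𝓝[≠] (0:ℂ)) (𝓝 0) := by
      have := hinv.neg
      simpa [inv_neg, neg_neg] using this
    have h3 := h2.const_mul (Real.pi * Real.log c)
    simp only [mul_zero] at h3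
    have : a = fun t : ℂ => (Real.pi * Real.log c) * (Real.log (‖t‖))⁻¹ := by
      funext t; rw [ha_def]; ring
    rw [this]
    exact h3
  have hJ : Tendsto (fun t : ℂ => ∫ x in (a t)..(Real.pi - a t), Real.sin x ^ (2 * k))
      (𝓝[≠] (0:ℂ)) (𝓝 (∫ x in (0:ℝ)..Real.pi, Real.sin x ^ (2 * k))) := by
    have hsplit : ∀ p q : ℝ, (∫ x in p..q, Real.sin x ^ (2 * k)) = G q - G p := by
      intro p q
      rw [hG_def]
      exact (intervalIntegral.integral_interval_sub_left (hint 0 q) (hint 0 p)).symm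
    simp_rw [hsplit]
    have h1 : Tendsto (fun t : ℂ => G (Real.pi - a t)) (𝓝[≠] (0:ℂ)) (𝓝 (G Real.pi)) := by
      refine (hGcont.tendsto _).comp ?_
      have := (tendsto_const_nhds (x := Real.pi) (f := 𝓝[≠] (0:ℂ))).sub hatend
      simpa using this
    have h2 : Tendsto (fun t : ℂ => G (a t)) (𝓝[≠] (0:ℂ)) (𝓝 (G 0)) :=
      (hGcont.tendsto _).comp hatend
    exact h1.sub h2
  -- eventual equality
  have heq : ∀ᶠ t in 𝓝[≠] (0:ℂ), ((2:ℝ) ^ (k + 1) / Real.pi ^ (2 * k + 1)) *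
      (∫ x in (a t)..(Real.pi - a t), Real.sin x ^ (2 * k))
      = Ione k c t * (Real.log (1 / ‖t‖)) ^ (-(2 * (k : ℤ)) - 1) := by
    have hmem : {t : ℂ | ‖t‖ < c ^ 2} ∈ 𝓝 (0:ℂ) := by
      have hb : Metric.ball (0:ℂ) (c ^ 2) ∈ 𝓝 (0:ℂ) := Metric.ball_mem_nhds _ (by positivity)
      refine Filter.mem_of_superset hb ?_
      intro t ht
      simpa [Metric.mem_ball, Complex.dist_eq] using ht
    filter_upwards [self_mem_nhdsWithin, mem_nhdsWithin_of_mem_nhds hmem] with t ht0 htb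
    have ht0' : t ≠ 0 := ht0
    have htb' : ‖t‖ < c ^ 2 := htb
    rw [Ione_eq k c hc0 hc1 t ht0' htb']
    have hs : 0 < ‖t‖ := norm_pos_iff.mpr ht0'
    have hs1 : ‖t‖ < 1 := lt_trans htb' (by nlinarith)
    have hL : Real.log (‖t‖) < 0 := Real.log_neg hs hs1
    have h1 : Real.log (1 / ‖t‖) = -Real.log (‖t‖) := by
      rw [one_div, Real.log_inv]
    rw [h1]
    have hX : (0:ℝ) < -Real.log (‖t‖) := by linarith
    have hXne : (-Real.log (‖t‖)) ^ (2 * k + 1 : ℕ) ≠ 0 := by positivity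
    have hz : (-Real.log (‖t‖)) ^ (-(2 * (k : ℤ)) - 1)
        = ((-Real.log (‖t‖)) ^ (2 * k + 1 : ℕ))⁻¹ := by
      rw [← zpow_natCast _ (2 * k + 1), ← zpow_neg]
      congr 1; push_cast; ring
    rw [hz]
    simp only [ha_def]
    field_simp
  refine Tendsto.congr' heq ?_
  have hval := hJ.const_mul ((2:ℝ) ^ (k + 1) / Real.pi ^ (2 * k + 1))
  have hvaleq : ((2:ℝ) ^ (k + 1) / Real.pi ^ (2 * k + 1)) *
      (∫ x in (0:ℝ)..Real.pi, Real.sin x ^ (2 * k))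
      = (Nat.factorial (2 * k) : ℝ) /
        (2 ^ (k - 1) * Real.pi ^ (2 * k) * (Nat.factorial k : ℝ) ^ 2) := by
    rw [integral_sin_pow_even, wallis_prod]
    have h4 : (2:ℝ) ^ (k - 1) * 2 ^ (k + 1) = 4 ^ k := by
      rw [← pow_add]
      have he : k - 1 + (k + 1) = 2 * k := by omega
      rw [he, pow_mul]; norm_num
    have hfac : (Nat.factorial k : ℝ) ≠ 0 := Nat.cast_ne_zero.2 (Nat.factorial_ne_zero _)
    have h2k : (2:ℝ) ^ (k - 1) ≠ 0 := by positivity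
    field_simp
    rw [← h4]
    ring
  rw [← hvaleq]
  exact hval
end

section
/- Let k ≥ 1 be an integer, 0 < c < 1 a real constant, and C > 0. Suppose f and g are holomorphic on the disc {u ∈ ℂ : |u| < c} and satisfy |f(u)| ≤ C|u| and |g(v)| ≤ C|v| for all |u|, |v| < c. Then there is a constant C′ > 0, depending only on k, c and C, such that for every complex t with 0 < |t| < c one has |∫_{A_t} f(u) · conj(g(t/u)) · F_{t,k}(u) dA(u)| ≤ C′ · |t| · (log(1/|t|))^{2k+1}. (Note that for u ∈ A_t one has |t/u| < c, so g(t/u) is defined.) -/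
open Complex MeasureTheory

lemma measurableSet_annulus (a b : ℝ) :
    MeasurableSet {u : ℂ | a < ‖u‖ ∧ ‖u‖ < b} := by
  have h : {u : ℂ | a < ‖u‖ ∧ ‖u‖ < b} = (fun u : ℂ => ‖u‖) ⁻¹' (Set.Ioo a b) := rfl
  rw [h]
  exact continuous_norm.measurable measurableSet_Ioo

lemma integral_annulus_inv_sq {a b : ℝ} (ha : 0 < a) (hab : a < b) :
    ∫ u in {u : ℂ | a < ‖u‖ ∧ ‖u‖ < b}, (‖u‖ ^ 2)⁻¹ =
      2 * Real.pi * Real.log (b / a) := by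
  have hmeas := measurableSet_annulus a b
  have h1 : ∫ u in {u : ℂ | a < ‖u‖ ∧ ‖u‖ < b}, (‖u‖ ^ 2)⁻¹ =
      ∫ u : ℂ, (Set.Ioo a b).indicator (fun r => (r ^ 2)⁻¹) ‖u‖ := by
    rw [← integral_indicator hmeas]
    apply integral_congr_ae
    filter_upwards with u
    by_cases h : u ∈ {u : ℂ | a < ‖u‖ ∧ ‖u‖ < b}
    · rw [Set.indicator_of_mem h, Set.indicator_of_mem (by exact h : ‖u‖ ∈ Set.Ioo a b)]
    · rw [Set.indicator_of_notMem h, Set.indicator_of_notMem (by exact h : ‖u‖ ∉ Set.Ioo a b)]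
  rw [h1, integral_fun_norm_addHaar (volume : Measure ℂ)
      ((Set.Ioo a b).indicator (fun r => (r ^ 2)⁻¹))]
  have hdim : Module.finrank ℝ ℂ = 2 := Complex.finrank_real_complex
  rw [hdim]
  have h2 : ∫ y in Set.Ioi (0:ℝ), y ^ (2 - 1) • (Set.Ioo a b).indicator (fun r => (r ^ 2)⁻¹) y =
      ∫ y in Set.Ioi (0:ℝ), (Set.Ioo a b).indicator (fun r => r⁻¹) y := by
    congr 1
    funext y
    by_cases h : y ∈ Set.Ioo a b
    · rw [smul_eq_mul, Set.indicator_of_mem h, Set.indicator_of_mem h]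
      have hy : y ≠ 0 := ne_of_gt (lt_trans ha h.1)
      field_simp
      ring
    · rw [smul_eq_mul, Set.indicator_of_notMem h, Set.indicator_of_notMem h, mul_zero]
  have hint : Set.Ioi (0:ℝ) ∩ Set.Ioo a b = Set.Ioo a b :=
    Set.inter_eq_right.mpr (fun y hy => lt_trans ha hy.1)
  rw [h2, setIntegral_indicator measurableSet_Ioo, hint,
    ← integral_Ioc_eq_integral_Ioo, ← intervalIntegral.integral_of_le hab.le,
    integral_inv (Set.notMem_uIcc_of_lt ha (lt_trans ha hab))]
  simp [Measure.real, Complex.volume_ball]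
  ring

/-- Let `k ≥ 1`, `0 < c < 1`, `C > 0`, and let `f, g` be holomorphic on the disc
`{|u| < c}` with `|f(u)| ≤ C|u|` and `|g(v)| ≤ C|v|` there.  Then there is `C′ > 0`,
depending only on `k`, `c`, `C`, such that for every `t` with `0 < |t| < c`,
`|∫_{A_t} f(u)·conj(g(t/u))·F_{t,k}(u) dA(u)| ≤ C′·|t|·(log(1/|t|))^{2k+1}`. -/
theorem cross_term_estimate (k : ℕ) (hk : 1 ≤ k) (c : ℝ) (hc0 : 0 < c) (hc1 : c < 1)
    (C : ℝ) (hC : 0 < C) (f g : ℂ → ℂ)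
    (hf : DifferentiableOn ℂ f (Metric.ball 0 c))
    (hg : DifferentiableOn ℂ g (Metric.ball 0 c))
    (hfb : ∀ u ∈ Metric.ball (0 : ℂ) c, ‖f u‖ ≤ C * ‖u‖)
    (hgb : ∀ v ∈ Metric.ball (0 : ℂ) c, ‖g v‖ ≤ C * ‖v‖) :
    ∃ C' > (0 : ℝ), ∀ t : ℂ, 0 < ‖t‖ → ‖t‖ < c →
      ‖∫ u in annulusA c t,
          f u * (starRingEnd ℂ) (g (t / u)) * (densityF k t u : ℂ)‖ ≤
        C' * ‖t‖ * (Real.log (1 / ‖t‖)) ^ (2 * k + 1) := by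
  refine ⟨C ^ 2 * 2 ^ (k + 1), by positivity, fun t ht0 htc => ?_⟩
  set T := ‖t‖ with hTdef
  have hT1 : T < 1 := lt_trans htc hc1
  set L := Real.log (1 / T) with hLdef
  have hLpos : 0 < L := Real.log_pos (by rw [lt_div_iff₀ ht0]; simpa using hT1)
  have hLT : Real.log T = -L := by rw [hLdef, one_div, Real.log_inv, neg_neg]
  have hpi : (0:ℝ) < Real.pi := Real.pi_pos
  have h1pi : (1:ℝ) ≤ Real.pi := le_trans one_le_two Real.two_le_pi
  have ha0 : 0 < T / c := div_pos ht0 hc0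
  rcases lt_or_ge (T / c) c with hac | hac
  · -- main case: nonempty annulus
    set K0 : ℝ := 2 ^ k / Real.pi * (L / Real.pi) ^ (2 * k) with hK0def
    have hK0 : 0 ≤ K0 := by positivity
    set κ : ℝ := C ^ 2 * T * K0 with hκdef
    have hκ0 : 0 ≤ κ := by positivity
    have hAeq : annulusA c t = {u : ℂ | T / c < ‖u‖ ∧ ‖u‖ < c} := rfl
    have hAmeas : MeasurableSet (annulusA c t) := measurableSet_annulus (T / c) c
    have hsub : annulusA c t ⊆ Metric.ball (0:ℂ) c := fun u hu => by
      rw [Metric.mem_ball, dist_zero_right]; exact hu.2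
    have hAfin : volume (annulusA c t) ≠ ⊤ :=
      ((measure_mono hsub).trans_lt measure_ball_lt_top).ne
    -- pointwise bound
    have hbound : ∀ u ∈ annulusA c t,
        ‖f u * (starRingEnd ℂ) (g (t / u)) * (densityF k t u : ℂ)‖ ≤
          κ * (‖u‖ ^ 2)⁻¹ := by
      intro u hu
      obtain ⟨hu1, hu2⟩ := hu
      have hA0 : 0 < ‖u‖ := lt_trans ha0 hu1
      have hAne : ‖u‖ ≠ 0 := ne_of_gt hA0
      have huball : u ∈ Metric.ball (0:ℂ) c := by
        rw [Metric.mem_ball, dist_zero_right]; exact hu2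
      have htu : ‖t / u‖ = T / ‖u‖ := norm_div t u
      have htuball : t / u ∈ Metric.ball (0:ℂ) c := by
        rw [Metric.mem_ball, dist_zero_right, htu, div_lt_iff₀ hA0]
        rw [div_lt_iff₀ hc0] at hu1
        linarith [hu1]
      -- bound on densityF
      set A := ‖u‖ with hAdef
      set X : ℝ := (A * Real.log T / Real.pi) *
        Real.sin (Real.pi * Real.log A / Real.log T) with hXdef
      have hzA : A ^ (-(2 * (k:ℤ)) - 2) = (A ^ (2 * k + 2))⁻¹ := by
        rw [← zpow_natCast A (2 * k + 2), ← zpow_neg]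
        congr 1
        push_cast; ring
      have hXabs : |X| ≤ A * L / Real.pi := by
        rw [hXdef, abs_mul]
        have h1 : |A * Real.log T / Real.pi| = A * L / Real.pi := by
          rw [abs_div, abs_mul, abs_of_pos hA0, abs_of_pos hpi, hLT, abs_neg,
            abs_of_pos hLpos]
        rw [h1]
        calc A * L / Real.pi * |Real.sin (Real.pi * Real.log A / Real.log T)| ≤
            A * L / Real.pi * 1 := by
              gcongr
              exact Real.abs_sin_le_one _
          _ = A * L / Real.pi := mul_one _
      have hX2k : X ^ (2 * k) ≤ (A * L / Real.pi) ^ (2 * k) := by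
        have hXnn : (0:ℝ) ≤ X ^ (2 * k) := (even_two_mul k).pow_nonneg X
        calc X ^ (2 * k) = |X| ^ (2 * k) := by
              rw [← _root_.abs_of_nonneg hXnn, ← pow_abs]
          _ ≤ (A * L / Real.pi) ^ (2 * k) := pow_le_pow_left₀ (abs_nonneg X) hXabs _
      have hF0 : 0 ≤ densityF k t u := by
        apply mul_nonneg (mul_nonneg (by positivity) (zpow_nonneg hA0.le _))
        exact (even_two_mul k).pow_nonneg _
      have hFle : densityF k t u ≤ K0 * (A ^ 2)⁻¹ := by
        unfold densityF
        rw [← hAdef, ← hXdef, hzA]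
        calc 2 ^ k / Real.pi * (A ^ (2 * k + 2))⁻¹ * X ^ (2 * k) ≤
            2 ^ k / Real.pi * (A ^ (2 * k + 2))⁻¹ * (A * L / Real.pi) ^ (2 * k) := by
              gcongr
          _ = K0 * (A ^ 2)⁻¹ := by
              rw [hK0def, div_pow, mul_pow, div_pow]
              field_simp
              ring
      calc ‖f u * (starRingEnd ℂ) (g (t / u)) * (densityF k t u : ℂ)‖ =
          ‖f u‖ * ‖g (t / u)‖ * |densityF k t u| := by
            rw [norm_mul, norm_mul, Complex.norm_conj, Complex.norm_real, Real.norm_eq_abs]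
        _ = ‖f u‖ * ‖g (t / u)‖ * densityF k t u := by
            rw [_root_.abs_of_nonneg hF0]
        _ ≤ (C * A) * (C * (T / A)) * (K0 * (A ^ 2)⁻¹) := by
            have hg' : ‖g (t / u)‖ ≤ C * (T / A) := by
              calc ‖g (t / u)‖ ≤ C * ‖t / u‖ := hgb _ htuball
                _ = C * (T / A) := by rw [htu]
            exact mul_le_mul (mul_le_mul (hfb u huball) hg' (norm_nonneg _)
              (by positivity)) hFle hF0 (by positivity)
        _ = κ * (A ^ 2)⁻¹ := by
            rw [hκdef]
            field_simp
    -- integrability of the majorant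
    have hGmeas : AEStronglyMeasurable (fun u : ℂ => κ * (‖u‖ ^ 2)⁻¹) volume := by
      apply Measurable.aestronglyMeasurable
      exact (((continuous_norm.measurable).pow_const 2).inv).const_mul κ
    have hGint : IntegrableOn (fun u : ℂ => κ * (‖u‖ ^ 2)⁻¹) (annulusA c t) := by
      apply Measure.integrableOn_of_bounded hAfin hGmeas (M := κ * ((T / c) ^ 2)⁻¹)
      filter_upwards [ae_restrict_mem hAmeas] with u hu
      have hA0 : 0 < ‖u‖ := lt_trans ha0 hu.1
      rw [Real.norm_eq_abs, _root_.abs_of_nonneg (by positivity)]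
      gcongr
      exact hu.1.le
    -- main chain
    have hIval : ∫ u in annulusA c t, (‖u‖ ^ 2)⁻¹ =
        2 * Real.pi * Real.log (c / (T / c)) := by
      rw [hAeq]
      exact integral_annulus_inv_sq ha0 hac
    have hlog : Real.log (c / (T / c)) ≤ L := by
      have h1 : c / (T / c) ≤ 1 / T := by
        rw [div_div_eq_mul_div]
        gcongr
        nlinarith
      calc Real.log (c / (T / c)) ≤ Real.log (1 / T) := Real.log_le_log (by positivity) h1
        _ = L := rfl
    have hkey : K0 * (2 * Real.pi * L) ≤ 2 ^ (k + 1) * L ^ (2 * k + 1) := by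
      have h1 : (L / Real.pi) ^ (2 * k) ≤ L ^ (2 * k) :=
        pow_le_pow_left₀ (by positivity) (div_le_self hLpos.le h1pi) _
      have h2 : K0 * (2 * Real.pi * L) = 2 ^ (k + 1) * ((L / Real.pi) ^ (2 * k) * L) := by
        rw [hK0def]
        field_simp
        ring
      rw [h2, pow_succ L (2 * k)]
      gcongr
    calc ‖∫ u in annulusA c t,
          f u * (starRingEnd ℂ) (g (t / u)) * (densityF k t u : ℂ)‖ =
        ‖∫ u in annulusA c t,
          f u * (starRingEnd ℂ) (g (t / u)) * (densityF k t u : ℂ)‖ := rfl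
      _ ≤ ∫ u in annulusA c t,
          ‖f u * (starRingEnd ℂ) (g (t / u)) * (densityF k t u : ℂ)‖ :=
            norm_integral_le_integral_norm _
      _ ≤ ∫ u in annulusA c t, κ * (‖u‖ ^ 2)⁻¹ := by
            apply integral_mono_of_nonneg
            · filter_upwards with u using norm_nonneg _
            · exact hGint
            · filter_upwards [ae_restrict_mem hAmeas] with u hu
              simpa using hbound u hu
      _ = κ * ∫ u in annulusA c t, (‖u‖ ^ 2)⁻¹ := integral_const_mul κ _
      _ = κ * (2 * Real.pi * Real.log (c / (T / c))) := by rw [hIval]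
      _ ≤ κ * (2 * Real.pi * L) := by gcongr
      _ = C ^ 2 * T * (K0 * (2 * Real.pi * L)) := by rw [hκdef]; ring
      _ ≤ C ^ 2 * T * (2 ^ (k + 1) * L ^ (2 * k + 1)) := by gcongr
      _ = C ^ 2 * 2 ^ (k + 1) * T * L ^ (2 * k + 1) := by ring
  · -- empty annulus
    have hempty : annulusA c t = ∅ := by
      ext u
      simp only [annulusA, Set.mem_setOf_eq, Set.mem_empty_iff_false, iff_false, not_and]
      intro h1
      linarith [h1, hac]
    rw [hempty]
    simp only [Measure.restrict_empty, integral_zero_measure, norm_zero]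
    positivity
end
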